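/- (FloodSet unanimity.) If there is a value v : V with init p = v for every process p, then for any delivery pattern, every t ≤ r and every process p satisfy W t p = {v}; in particular every process decides v. -/
import Mathlib


open scoped Classical

/-- The FloodSet execution: `W 0 p = {init p}` and, for `t < r`,
`W (t+1) p = W t p ∪ ⋃ q, (if delivered t q p then W t q else ∅)`
(beyond round `r` the set is just carried along). -/
noncomputable def floodW {n r : ℕ} {V : Type} (init : Fin n → V)
    (delivered : Fin r → Fin n → Fin n → Prop) : ℕ → Fin n → Finset V
  | 0, p => {init p}
  | t + 1, p =>
      if h : t < r then
        floodW init delivered t p ∪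
          Finset.univ.biUnion fun q =>
            if delivered ⟨t, h⟩ q p then floodW init delivered t q else ∅
      else floodW init delivered t p

/-- Process `p` is alive at the end of round `t`. -/
def aliveAtEnd {n r : ℕ} (crash : Fin n → Option (Fin r)) (t : ℕ) (p : Fin n) : Prop :=
  crash p = none ∨ ∃ s : Fin r, crash p = some s ∧ t < s.val

/-- The delivery pattern is consistent with the crash pattern. -/
def consistentDel {n r : ℕ} (crash : Fin n → Option (Fin r))
    (delivered : Fin r → Fin n → Fin n → Prop) : Prop :=
  (∀ (t : Fin r) (q p : Fin n),
      (crash q = none ∨ ∃ s : Fin r, crash q = some s ∧ t.val < s.val) → delivered t q p) ∧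
  (∀ (t : Fin r) (q p : Fin n) (s : Fin r), crash q = some s → s.val < t.val →
      ¬ delivered t q p)

/-- FloodSet unanimity. -/
theorem stmt_11 (n r : ℕ) (hr : 1 ≤ r)
    (V : Type) [Fintype V] [Nonempty V] [LinearOrder V]
    (init : Fin n → V) (v : V) (hv : ∀ p : Fin n, init p = v)
    (delivered : Fin r → Fin n → Fin n → Prop) :
    (∀ t ≤ r, ∀ p : Fin n, floodW init delivered t p = {v}) ∧
    ∀ p : Fin n, (floodW init delivered r p).min = (v : WithBot V) := by
  have key : ∀ t, ∀ p : Fin n, floodW init delivered t p = {v} := by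
    intro t
    induction t with
    | zero => intro p; simp [floodW, hv p]
    | succ t ih =>
      intro p
      by_cases h : t < r
      · simp only [floodW, dif_pos h, ih p]
        ext x
        simp only [Finset.mem_union, Finset.mem_biUnion]
        constructor
        · rintro (hx | ⟨q, _, hq⟩)
          · exact hx
          · split_ifs at hq with hd
            · rwa [ih q] at hq
            · simp at hq
        · intro hx; exact Or.inl hx
      · simp [floodW, dif_neg h, ih p]
  refine ⟨fun t _ p => key t p, fun p => ?_⟩
  rw [key r p]; exact Finset.min_singleton
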